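/- Let Z and W be Banach spaces, V ⊆ Z an open set, z₀ ∈ V, 𝒩 : Z → Set W a set-valued map, and φ : V → W continuously Fréchet differentiable with 0 ∈ φ(z₀) + 𝒩(z₀). Suppose z₀ is a strongly regular solution: there exist neighborhoods V_Z of z₀ and V_W of 0 ∈ W and a constant c ≥ 0 such that for every δ ∈ V_W the linearized inclusion δ ∈ φ(z₀) + Dφ(z₀)(z − z₀) + 𝒩(z) has exactly one solution ζ(δ) in V_Z, and ‖ζ(δ₁) − ζ(δ₂)‖ ≤ c ‖δ₁ − δ₂‖ for all δ₁, δ₂ ∈ V_W. For continuously differentiable ψ : V → W set ‖ψ‖_{1,V} = sup_{z∈V} ‖ψ(z)‖ + sup_{z∈V} ‖Dψ(z)‖. Then there exist ε > 0, a neighborhood U₀ of z₀, and κ ≥ 0 such that for every continuously differentiable ψ : V → W with ‖ψ − φ‖_{1,V} ≤ ε, the inclusion 0 ∈ ψ(z) + 𝒩(z) has a unique solution z̄(ψ) in U₀, and ‖z̄(ψ₁) − z̄(ψ₂)‖ ≤ κ ‖ψ₁ − ψ₂‖_{1,V} for any two such perturbations ψ₁, ψ₂. -/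

import Mathlib

open Topology

variable {Z W : Type*} [NormedAddCommGroup Z] [NormedSpace ℝ Z] [CompleteSpace Z]
  [NormedAddCommGroup W] [NormedSpace ℝ W] [CompleteSpace W]

/-- The `C¹` norm `‖ψ‖_{1,V} = sup_{z∈V} ‖ψ z‖ + sup_{z∈V} ‖Dψ(z)‖` of a map on `V`. -/
noncomputable def norm1 (V : Set Z) (ψ : Z → W) : ℝ :=
  (⨆ z ∈ V, ‖ψ z‖) + (⨆ z ∈ V, ‖fderiv ℝ ψ z‖)

lemma le_biSup_of_bddAbove {Z : Type*} {V : Set Z} {g : Z → ℝ}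
    (hb : BddAbove (g '' V)) {z : Z} (hz : z ∈ V) : g z ≤ ⨆ x ∈ V, g x := by
  have h1 : BddAbove (Set.range fun x => ⨆ _ : x ∈ V, g x) := by
    obtain ⟨B, hB⟩ := hb
    refine ⟨max B 0, ?_⟩
    rintro y ⟨x, rfl⟩
    show (⨆ _ : x ∈ V, g x) ≤ max B 0
    by_cases hx : x ∈ V
    · rw [ciSup_pos (f := fun _ => g x) hx]
      exact le_max_of_le_left (hB (Set.mem_image_of_mem g hx))
    · haveI : IsEmpty (x ∈ V) := ⟨hx⟩
      rw [Real.iSup_of_isEmpty (fun _ => g x)]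
      exact le_max_right _ _
  calc g z = ⨆ _ : z ∈ V, g z := (ciSup_pos (f := fun _ => g z) hz).symm
    _ ≤ ⨆ x ∈ V, g x := le_ciSup h1 z

/-- Norm of a difference bounded by the `C¹` norm. -/
lemma norm_le_norm1 {V : Set Z} {h : Z → W}
    (hb : BddAbove ((fun z => ‖h z‖) '' V)) {z : Z} (hz : z ∈ V) :
    ‖h z‖ ≤ norm1 V h := by
  have h2 : (0:ℝ) ≤ ⨆ z ∈ V, ‖fderiv ℝ h z‖ :=
    Real.iSup_nonneg fun z => Real.iSup_nonneg fun _ => norm_nonneg _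
  have h1 : ‖h z‖ ≤ ⨆ x ∈ V, ‖h x‖ := le_biSup_of_bddAbove hb hz
  unfold norm1; linarith

/-- Norm of the derivative bounded by the `C¹` norm. -/
lemma norm_fderiv_le_norm1 {V : Set Z} {h : Z → W}
    (hb : BddAbove ((fun z => ‖fderiv ℝ h z‖) '' V)) {z : Z} (hz : z ∈ V) :
    ‖fderiv ℝ h z‖ ≤ norm1 V h := by
  have h2 : (0:ℝ) ≤ ⨆ z ∈ V, ‖h z‖ :=
    Real.iSup_nonneg fun z => Real.iSup_nonneg fun _ => norm_nonneg _
  have h1 : ‖fderiv ℝ h z‖ ≤ ⨆ x ∈ V, ‖fderiv ℝ h x‖ := le_biSup_of_bddAbove hb hz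
  unfold norm1; linarith

set_option maxHeartbeats 1000000 in
/-- Robinson's strong regularity theorem: if `z₀` is a strongly regular
solution of the generalized equation `0 ∈ φ(z) + 𝒩(z)`, then every `C¹` perturbation
`ψ` of `φ` which is close to `φ` in the `C¹` norm `‖·‖_{1,V}` admits a unique solution
`z̄(ψ)` of `0 ∈ ψ(z) + 𝒩(z)` near `z₀`, and `z̄(·)` is Lipschitz with respect to
`‖·‖_{1,V}`. -/
theorem robinson_strong_regularity
    (V : Set Z) (hV : IsOpen V) (z₀ : Z) (hz₀ : z₀ ∈ V)
    (𝒩 : Z → Set W) (φ : Z → W) (hφ : ContDiffOn ℝ 1 φ V)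
    (hsol : ∃ w ∈ 𝒩 z₀, (0 : W) = φ z₀ + w)
    (VZ : Set Z) (hVZ : VZ ∈ 𝓝 z₀) (VW : Set W) (hVW : VW ∈ 𝓝 (0 : W))
    (c : ℝ) (hc : 0 ≤ c) (ζ : W → Z)
    (hζsol : ∀ δ ∈ VW, ζ δ ∈ VZ ∧
      ∃ w ∈ 𝒩 (ζ δ), δ = φ z₀ + fderiv ℝ φ z₀ (ζ δ - z₀) + w)
    (hζuniq : ∀ δ ∈ VW, ∀ z ∈ VZ,
      (∃ w ∈ 𝒩 z, δ = φ z₀ + fderiv ℝ φ z₀ (z - z₀) + w) → z = ζ δ)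
    (hζlip : ∀ δ₁ ∈ VW, ∀ δ₂ ∈ VW, ‖ζ δ₁ - ζ δ₂‖ ≤ c * ‖δ₁ - δ₂‖) :
    ∃ ε : ℝ, 0 < ε ∧ ∃ U₀ ∈ 𝓝 z₀, ∃ κ : ℝ, 0 ≤ κ ∧
      (∀ ψ : Z → W, ContDiffOn ℝ 1 ψ V →
        BddAbove ((fun z => ‖ψ z - φ z‖) '' V) →
        BddAbove ((fun z => ‖fderiv ℝ (fun z => ψ z - φ z) z‖) '' V) →
        norm1 V (fun z => ψ z - φ z) ≤ ε →
        ∃! z : Z, z ∈ U₀ ∧ ∃ w ∈ 𝒩 z, (0 : W) = ψ z + w) ∧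
      (∀ ψ₁ ψ₂ : Z → W, ContDiffOn ℝ 1 ψ₁ V → ContDiffOn ℝ 1 ψ₂ V →
        BddAbove ((fun z => ‖ψ₁ z - φ z‖) '' V) →
        BddAbove ((fun z => ‖fderiv ℝ (fun z => ψ₁ z - φ z) z‖) '' V) →
        BddAbove ((fun z => ‖ψ₂ z - φ z‖) '' V) →
        BddAbove ((fun z => ‖fderiv ℝ (fun z => ψ₂ z - φ z) z‖) '' V) →
        norm1 V (fun z => ψ₁ z - φ z) ≤ ε → norm1 V (fun z => ψ₂ z - φ z) ≤ ε →
        ∀ z₁ z₂ : Z,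
          z₁ ∈ U₀ → (∃ w ∈ 𝒩 z₁, (0 : W) = ψ₁ z₁ + w) →
          z₂ ∈ U₀ → (∃ w ∈ 𝒩 z₂, (0 : W) = ψ₂ z₂ + w) →
          ‖z₁ - z₂‖ ≤ κ * norm1 V (fun z => ψ₁ z - ψ₂ z)) := by
  classical
  obtain ⟨w₀, hw₀, hw₀eq⟩ := hsol
  have hz₀VZ : z₀ ∈ VZ := mem_of_mem_nhds hVZ
  have h0VW : (0:W) ∈ VW := mem_of_mem_nhds hVW
  set A := fderiv ℝ φ z₀ with hA
  have hζ0 : ζ 0 = z₀ :=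
    (hζuniq 0 h0VW z₀ hz₀VZ ⟨w₀, hw₀, by rw [sub_self, map_zero, add_zero]; exact hw₀eq⟩).symm
  obtain ⟨τ, hτ, hτVW⟩ := Metric.mem_nhds_iff.mp hVW
  obtain ⟨ρ₀, hρ₀, hρ₀sub⟩ := Metric.mem_nhds_iff.mp (Filter.inter_mem hVZ (hV.mem_nhds hz₀))
  have hcpos : (0:ℝ) < c + 1 := by linarith
  set η : ℝ := 1/(4*(c+1)) with hηdef
  have hη : 0 < η := by positivity
  -- continuity of the derivative at z₀
  have hdcont : ContinuousOn (fderiv ℝ φ) V := hφ.continuousOn_fderiv_of_isOpen hV le_rfl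
  obtain ⟨ρ', hρ', hρ'η⟩ :=
    Metric.continuousAt_iff.mp (hdcont.continuousAt (hV.mem_nhds hz₀)) η hη
  set ρ₁ : ℝ := min (min (ρ₀/2) (ρ'/2)) (τ/(4*η)) with hρ₁def
  have hρ₁ : 0 < ρ₁ := by
    apply lt_min (lt_min (by linarith) (by linarith)); positivity
  set S := Metric.closedBall z₀ ρ₁ with hSdef
  have hz₀S : z₀ ∈ S := Metric.mem_closedBall_self hρ₁.le
  have hSsub : S ⊆ VZ ∩ V := by
    intro x hx
    apply hρ₀sub
    rw [Metric.mem_ball]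
    calc dist x z₀ ≤ ρ₁ := Metric.mem_closedBall.mp hx
      _ ≤ ρ₀/2 := le_trans (min_le_left _ _) (min_le_left _ _)
      _ < ρ₀ := by linarith
  have hSV : S ⊆ V := fun x hx => (hSsub hx).2
  have hSVZ : S ⊆ VZ := fun x hx => (hSsub hx).1
  have hderiv_close : ∀ x ∈ S, ‖fderiv ℝ φ x - A‖ ≤ η := by
    intro x hx
    have hxd : dist x z₀ < ρ' := by
      calc dist x z₀ ≤ ρ₁ := Metric.mem_closedBall.mp hx
        _ ≤ ρ'/2 := le_trans (min_le_left _ _) (min_le_right _ _)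
        _ < ρ' := by linarith
    have := hρ'η hxd
    rw [dist_eq_norm] at this
    exact this.le
  have hηρ₁ : η * ρ₁ ≤ τ/4 := by
    have h1 : ρ₁ ≤ τ/(4*η) := min_le_right _ _
    calc η * ρ₁ ≤ η * (τ/(4*η)) := by nlinarith
      _ = τ/4 := by field_simp
  set ε : ℝ := min η (min (τ/4) (ρ₁/(2*(c+1)))) with hεdef
  have hε : 0 < ε := by
    apply lt_min hη (lt_min (by linarith) (by positivity))
  have hετ : ε ≤ τ/4 := le_trans (min_le_right _ _) (min_le_left _ _)
  have hεposρ : ε ≤ ρ₁/(2*(c+1)) := le_trans (min_le_right _ _) (min_le_right _ _)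
  have hεη : ε ≤ η := min_le_left _ _
  have hcη : c * η ≤ 1/4 := by
    rw [hηdef, mul_one_div, div_le_div_iff₀ (by positivity) (by norm_num)]
    linarith
  have hcε : c * ε ≤ 1/4 := le_trans (mul_le_mul_of_nonneg_left hεη hc) hcη
  have hcερ : c * ε ≤ ρ₁/2 := by
    calc c * ε ≤ c * (ρ₁/(2*(c+1))) := mul_le_mul_of_nonneg_left hεposρ hc
      _ = (c*ρ₁)/(2*(c+1)) := by ring
      _ ≤ ρ₁/2 := by
        rw [div_le_div_iff₀ (by positivity) (by norm_num : (0:ℝ) < 2)]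
        nlinarith [hρ₁.le]
  -- differentiability
  have hφd : ∀ x ∈ V, DifferentiableAt ℝ φ x := fun x hx =>
    ((hφ.differentiableOn one_ne_zero) x hx).differentiableAt (hV.mem_nhds hx)
  have hconv : Convex ℝ S := convex_closedBall _ _
  -- mean value estimate for φ
  have keyφ : ∀ x ∈ S, ∀ y ∈ S, ‖φ x - φ y - A (x - y)‖ ≤ η * ‖x - y‖ := by
    intro x hx y hy
    have hg : ∀ u ∈ S, HasFDerivWithinAt (fun v => φ v - A v) (fderiv ℝ φ u - A) S u :=
      fun u hu => (((hφd u (hSV hu)).hasFDerivAt).sub (A.hasFDerivAt)).hasFDerivWithinAt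
    have h := hconv.norm_image_sub_le_of_norm_hasFDerivWithin_le hg hderiv_close hy hx
    have hrw : φ x - A x - (φ y - A y) = φ x - φ y - A (x - y) := by
      rw [map_sub]; abel
    rw [hrw] at h
    exact h
  -- mean value estimate for perturbations
  have keyψ : ∀ ψ : Z → W, ContDiffOn ℝ 1 ψ V →
      BddAbove ((fun z => ‖fderiv ℝ (fun z => ψ z - φ z) z‖) '' V) →
      ∀ x ∈ S, ∀ y ∈ S,
      ‖(ψ x - φ x) - (ψ y - φ y)‖ ≤ (norm1 V (fun z => ψ z - φ z)) * ‖x - y‖ := by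
    intro ψ hψ hb2 x hx y hy
    have hψd : ∀ u ∈ V, DifferentiableAt ℝ (fun z => ψ z - φ z) u := fun u hu =>
      (((hψ.differentiableOn one_ne_zero) u hu).differentiableAt (hV.mem_nhds hu)).sub (hφd u hu)
    have hg : ∀ u ∈ S, HasFDerivWithinAt (fun z => ψ z - φ z)
        (fderiv ℝ (fun z => ψ z - φ z) u) S u :=
      fun u hu => ((hψd u (hSV hu)).hasFDerivAt).hasFDerivWithinAt
    have hbd : ∀ u ∈ S, ‖fderiv ℝ (fun z => ψ z - φ z) u‖ ≤ norm1 V (fun z => ψ z - φ z) :=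
      fun u hu => norm_fderiv_le_norm1 hb2 (hSV hu)
    exact hconv.norm_image_sub_le_of_norm_hasFDerivWithin_le hg hbd hy hx
  -- the auxiliary map whose fixed points solve the perturbed inclusion
  set r : (Z → W) → Z → W := fun ψ z => φ z₀ + A (z - z₀) - ψ z with hrdef
  -- bound and membership of `r ψ z` in `VW`
  have keyr : ∀ ψ : Z → W, (∀ x ∈ S, ‖ψ x - φ x‖ ≤ ε) →
      ∀ z ∈ S, ‖r ψ z‖ ≤ ε + η * ρ₁ ∧ r ψ z ∈ VW := by
    intro ψ hψε z hz
    have hrw : r ψ z = (φ z₀ - φ z - A (z₀ - z)) + (φ z - ψ z) := by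
      simp only [hrdef]
      rw [map_sub, map_sub]
      abel
    have hφb := keyφ z₀ hz₀S z hz
    have hz0 : ‖z₀ - z‖ ≤ ρ₁ := by
      rw [← dist_eq_norm, dist_comm]
      exact Metric.mem_closedBall.mp hz
    have h1 : ‖r ψ z‖ ≤ ε + η * ρ₁ := by
      calc ‖r ψ z‖ ≤ ‖φ z₀ - φ z - A (z₀ - z)‖ + ‖φ z - ψ z‖ := by
            rw [hrw]; exact norm_add_le _ _
        _ ≤ η * ‖z₀ - z‖ + ‖ψ z - φ z‖ := by
            rw [norm_sub_rev (φ z) (ψ z)]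
            exact add_le_add hφb le_rfl
        _ ≤ η * ρ₁ + ε := by
            have := hψε z hz
            have h2 : η * ‖z₀ - z‖ ≤ η * ρ₁ := mul_le_mul_of_nonneg_left hz0 hη.le
            linarith
        _ = ε + η * ρ₁ := by ring
    refine ⟨h1, hτVW ?_⟩
    rw [mem_ball_zero_iff]
    calc ‖r ψ z‖ ≤ ε + η * ρ₁ := h1
      _ ≤ τ/4 + τ/4 := by linarith
      _ < τ := by linarith
  -- Lipschitz estimate for `r ψ` on `S`
  have keyrlip : ∀ ψ : Z → W, ContDiffOn ℝ 1 ψ V →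
      BddAbove ((fun z => ‖fderiv ℝ (fun z => ψ z - φ z) z‖) '' V) →
      norm1 V (fun z => ψ z - φ z) ≤ ε →
      ∀ x ∈ S, ∀ y ∈ S, ‖r ψ x - r ψ y‖ ≤ (η + ε) * ‖x - y‖ := by
    intro ψ hψ hb2 hn x hx y hy
    have hrw : r ψ x - r ψ y = -(φ x - φ y - A (x - y)) - ((ψ x - φ x) - (ψ y - φ y)) := by
      simp only [hrdef]
      rw [map_sub A x z₀, map_sub A y z₀, map_sub A x y]
      abel
    have h1 := keyφ x hx y hy
    have h2 := keyψ ψ hψ hb2 x hx y hy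
    have h3 : norm1 V (fun z => ψ z - φ z) * ‖x - y‖ ≤ ε * ‖x - y‖ :=
      mul_le_mul_of_nonneg_right hn (norm_nonneg _)
    calc ‖r ψ x - r ψ y‖
        ≤ ‖-(φ x - φ y - A (x - y))‖ + ‖(ψ x - φ x) - (ψ y - φ y)‖ := by
          rw [hrw]; exact norm_sub_le _ _
      _ = ‖φ x - φ y - A (x - y)‖ + ‖(ψ x - φ x) - (ψ y - φ y)‖ := by rw [norm_neg]
      _ ≤ η * ‖x - y‖ + ε * ‖x - y‖ := by linarith
      _ = (η + ε) * ‖x - y‖ := by ring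
  -- fixed point characterization of solutions
  have keyfix : ∀ ψ : Z → W, (∀ z ∈ S, r ψ z ∈ VW) →
      ∀ z ∈ S, ((∃ w ∈ 𝒩 z, (0:W) = ψ z + w) ↔ ζ (r ψ z) = z) := by
    intro ψ hmem z hz
    constructor
    · rintro ⟨w, hw, heq⟩
      refine (hζuniq (r ψ z) (hmem z hz) z (hSVZ hz) ⟨w, hw, ?_⟩).symm
      have hw' : w = -ψ z := eq_neg_of_add_eq_zero_right heq.symm
      rw [hw']
      simp only [hrdef]
      abel
    · intro hfix
      obtain ⟨w, hw, heq⟩ := (hζsol (r ψ z) (hmem z hz)).2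
      rw [hfix] at hw heq
      refine ⟨w, hw, ?_⟩
      have heq' : φ z₀ + A (z - z₀) - ψ z = φ z₀ + A (z - z₀) + w := heq
      have h2 : -ψ z = w := by
        have h3 : φ z₀ + A (z - z₀) + -ψ z = φ z₀ + A (z - z₀) + w := by
          rw [← heq']; abel
        exact add_left_cancel h3
      rw [← h2]
      abel
  -- self-map property
  have keyself : ∀ ψ : Z → W, (∀ z ∈ S, ‖r ψ z‖ ≤ ε + η * ρ₁ ∧ r ψ z ∈ VW) →
      ∀ z ∈ S, ζ (r ψ z) ∈ S := by
    intro ψ hr z hz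
    obtain ⟨h1, h2⟩ := hr z hz
    have h3 : ‖ζ (r ψ z) - z₀‖ ≤ ρ₁ := by
      calc ‖ζ (r ψ z) - z₀‖ = ‖ζ (r ψ z) - ζ 0‖ := by rw [hζ0]
        _ ≤ c * ‖r ψ z - 0‖ := hζlip _ h2 _ h0VW
        _ = c * ‖r ψ z‖ := by rw [sub_zero]
        _ ≤ c * (ε + η * ρ₁) := mul_le_mul_of_nonneg_left h1 hc
        _ = c * ε + (c * η) * ρ₁ := by ring
        _ ≤ ρ₁/2 + (1/4) * ρ₁ := by
            have := mul_le_mul_of_nonneg_right hcη hρ₁.le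
            linarith
        _ ≤ ρ₁ := by linarith
    rw [Metric.mem_closedBall, dist_eq_norm]
    exact h3
  -- contraction property
  have keycontr : ∀ ψ : Z → W, (∀ z ∈ S, r ψ z ∈ VW) →
      (∀ x ∈ S, ∀ y ∈ S, ‖r ψ x - r ψ y‖ ≤ (η + ε) * ‖x - y‖) →
      ∀ x ∈ S, ∀ y ∈ S, ‖ζ (r ψ x) - ζ (r ψ y)‖ ≤ (1/2) * ‖x - y‖ := by
    intro ψ hmem hlip x hx y hy
    calc ‖ζ (r ψ x) - ζ (r ψ y)‖ ≤ c * ‖r ψ x - r ψ y‖ := hζlip _ (hmem x hx) _ (hmem y hy)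
      _ ≤ c * ((η + ε) * ‖x - y‖) :=
          mul_le_mul_of_nonneg_left (hlip x hx y hy) hc
      _ = (c * η + c * ε) * ‖x - y‖ := by ring
      _ ≤ (1/2) * ‖x - y‖ := by
          apply mul_le_mul_of_nonneg_right _ (norm_nonneg _)
          linarith
  refine ⟨ε, hε, S, Metric.closedBall_mem_nhds z₀ hρ₁, 2*c, by linarith, ?_, ?_⟩
  · -- existence and uniqueness
    intro ψ hψ hb1 hb2 hn
    have hψε : ∀ x ∈ S, ‖ψ x - φ x‖ ≤ ε := fun x hx =>
      le_trans (norm_le_norm1 hb1 (hSV hx)) hn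
    have hrb := keyr ψ hψε
    have hmem : ∀ z ∈ S, r ψ z ∈ VW := fun z hz => (hrb z hz).2
    have hlip := keyrlip ψ hψ hb2 hn
    set F : Z → Z := fun z => ζ (r ψ z) with hFdef
    have hmaps : Set.MapsTo F S S := fun z hz => keyself ψ hrb z hz
    have hSc : IsComplete S := Metric.isClosed_closedBall.isComplete
    have hcoe : ((1/2 : NNReal) : ℝ) = 1/2 := by norm_num
    have hcontr : ContractingWith (1/2 : NNReal) (hmaps.restrict F S S) := by
      constructor
      · rw [← NNReal.coe_lt_coe, hcoe]; norm_num
      · apply LipschitzWith.of_dist_le_mul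
        rintro ⟨x, hx⟩ ⟨y, hy⟩
        have h1 : dist ((hmaps.restrict F S S) ⟨x, hx⟩) ((hmaps.restrict F S S) ⟨y, hy⟩)
            = dist (F x) (F y) := rfl
        have h2 : dist (⟨x, hx⟩ : S) (⟨y, hy⟩ : S) = dist x y := rfl
        rw [h1, h2, hcoe, dist_eq_norm, dist_eq_norm]
        exact keycontr ψ hmem hlip x hx y hy
    obtain ⟨y, hyS, hyfix, -, -⟩ :=
      ContractingWith.exists_fixedPoint' hSc hmaps hcontr hz₀S (edist_ne_top _ _)
    refine ⟨y, ⟨hyS, (keyfix ψ hmem y hyS).mpr hyfix⟩, ?_⟩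
    rintro z' ⟨hz'S, hsol'⟩
    have h1 : ζ (r ψ z') = z' := (keyfix ψ hmem z' hz'S).mp hsol'
    have hyfix' : ζ (r ψ y) = y := hyfix
    have h2 : ‖z' - y‖ ≤ (1/2) * ‖z' - y‖ := by
      calc ‖z' - y‖ = ‖ζ (r ψ z') - ζ (r ψ y)‖ := by rw [h1, hyfix']
        _ ≤ (1/2) * ‖z' - y‖ := keycontr ψ hmem hlip z' hz'S y hyS
    have h3 : ‖z' - y‖ = 0 := le_antisymm (by linarith) (norm_nonneg _)
    exact sub_eq_zero.mp (norm_eq_zero.mp h3)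
  · -- Lipschitz dependence
    intro ψ₁ ψ₂ hψ₁ hψ₂ hb11 hb12 hb21 hb22 hn1 hn2 z₁ z₂ hz₁ hsol1 hz₂ hsol2
    have hψ₁ε : ∀ x ∈ S, ‖ψ₁ x - φ x‖ ≤ ε := fun x hx =>
      le_trans (norm_le_norm1 hb11 (hSV hx)) hn1
    have hψ₂ε : ∀ x ∈ S, ‖ψ₂ x - φ x‖ ≤ ε := fun x hx =>
      le_trans (norm_le_norm1 hb21 (hSV hx)) hn2
    have hmem₁ : ∀ z ∈ S, r ψ₁ z ∈ VW := fun z hz => (keyr ψ₁ hψ₁ε z hz).2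
    have hmem₂ : ∀ z ∈ S, r ψ₂ z ∈ VW := fun z hz => (keyr ψ₂ hψ₂ε z hz).2
    have hfix1 : ζ (r ψ₁ z₁) = z₁ := (keyfix ψ₁ hmem₁ z₁ hz₁).mp hsol1
    have hfix2 : ζ (r ψ₂ z₂) = z₂ := (keyfix ψ₂ hmem₂ z₂ hz₂).mp hsol2
    set N := norm1 V (fun z => ψ₁ z - ψ₂ z) with hNdef
    have hb12' : BddAbove ((fun z => ‖ψ₁ z - ψ₂ z‖) '' V) := by
      obtain ⟨B₁, hB₁⟩ := hb11
      obtain ⟨B₂, hB₂⟩ := hb21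
      refine ⟨B₁ + B₂, ?_⟩
      rintro y ⟨x, hx, rfl⟩
      have e1 : ‖ψ₁ x - φ x‖ ≤ B₁ := hB₁ (Set.mem_image_of_mem _ hx)
      have e2 : ‖ψ₂ x - φ x‖ ≤ B₂ := hB₂ (Set.mem_image_of_mem _ hx)
      calc ‖ψ₁ x - ψ₂ x‖ = ‖(ψ₁ x - φ x) - (ψ₂ x - φ x)‖ := by rw [sub_sub_sub_cancel_right]
        _ ≤ ‖ψ₁ x - φ x‖ + ‖ψ₂ x - φ x‖ := norm_sub_le _ _
        _ ≤ B₁ + B₂ := add_le_add e1 e2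
    have hcross : ‖r ψ₁ z₂ - r ψ₂ z₂‖ ≤ N := by
      have hrw : r ψ₁ z₂ - r ψ₂ z₂ = -(ψ₁ z₂ - ψ₂ z₂) := by
        simp only [hrdef]; abel
      rw [hrw, norm_neg]
      exact norm_le_norm1 hb12' (hSV hz₂)
    have hN : 0 ≤ N := by
      rw [hNdef]
      unfold norm1
      have g1 : (0:ℝ) ≤ ⨆ z ∈ V, ‖ψ₁ z - ψ₂ z‖ :=
        Real.iSup_nonneg fun z => Real.iSup_nonneg fun _ => norm_nonneg _
      have g2 : (0:ℝ) ≤ ⨆ z ∈ V, ‖fderiv ℝ (fun z => ψ₁ z - ψ₂ z) z‖ :=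
        Real.iSup_nonneg fun z => Real.iSup_nonneg fun _ => norm_nonneg _
      linarith
    have tri : ‖r ψ₁ z₁ - r ψ₂ z₂‖ ≤ ‖r ψ₁ z₁ - r ψ₁ z₂‖ + ‖r ψ₁ z₂ - r ψ₂ z₂‖ := by
      simpa [dist_eq_norm] using dist_triangle (r ψ₁ z₁) (r ψ₁ z₂) (r ψ₂ z₂)
    have hlip1 := keyrlip ψ₁ hψ₁ hb12 hn1 z₁ hz₁ z₂ hz₂
    have main : ‖z₁ - z₂‖ ≤ (1/2) * ‖z₁ - z₂‖ + c * N := by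
      calc ‖z₁ - z₂‖ = ‖ζ (r ψ₁ z₁) - ζ (r ψ₂ z₂)‖ := by rw [hfix1, hfix2]
        _ ≤ c * ‖r ψ₁ z₁ - r ψ₂ z₂‖ := hζlip _ (hmem₁ z₁ hz₁) _ (hmem₂ z₂ hz₂)
        _ ≤ c * ((η + ε) * ‖z₁ - z₂‖ + N) := by
            apply mul_le_mul_of_nonneg_left _ hc
            linarith
        _ = (c * η + c * ε) * ‖z₁ - z₂‖ + c * N := by ring
        _ ≤ (1/2) * ‖z₁ - z₂‖ + c * N := by
            have h5 : (c * η + c * ε) * ‖z₁ - z₂‖ ≤ (1/2) * ‖z₁ - z₂‖ :=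
              mul_le_mul_of_nonneg_right (by linarith) (norm_nonneg _)
            linarith
    linarith
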